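/- Three-qubit regular tetrahedral basis (same orientation): the vector ψ = (1/2)·[1, (9+3i)/10, (9+3i)/10, (−1+3i)/10, (9+3i)/10, (−1+3i)/10, (−1+3i)/10, 0]ᵀ ∈ ℂ⁸ (coordinates in the basis |000⟩,|001⟩,|010⟩,|011⟩,|100⟩,|101⟩,|110⟩,|111⟩) is a unit vector, its orbit {U_g ψ : g ∈ {0,1}³} under G_tetra^{(3)} is an orthonormal basis of (ℂ²)^{⊗3}, and for every qubit i ∈ {1,2,3} and every P ∈ {X, Y, Z}, ⟨ψ, P^{(i)} ψ⟩ = 9/20; i.e. all three single-qubit Bloch vectors equal (9/20, 9/20, 9/20). -/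

import Mathlib

open Matrix Complex Finset

/-- Pauli X. -/
noncomputable def X2 : Matrix (Fin 2) (Fin 2) ℂ := !![0, 1; 1, 0]

/-- Pauli Y. -/
noncomputable def Y2 : Matrix (Fin 2) (Fin 2) ℂ := !![0, -Complex.I; Complex.I, 0]

/-- Pauli Z. -/
noncomputable def Z2 : Matrix (Fin 2) (Fin 2) ℂ := !![1, 0; 0, -1]

/-- Tensor product of single-qubit operators, as a matrix on (ℂ²)^{⊗n}. -/
noncomputable def tensorOp2 {n : ℕ} (A : Fin n → Matrix (Fin 2) (Fin 2) ℂ) :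
    Matrix (Fin n → Fin 2) (Fin n → Fin 2) ℂ :=
  Matrix.of fun v w => ∏ i, A i (v i) (w i)

/-- Single-site operator A acting on qubit i (identity elsewhere). -/
noncomputable def single2 {n : ℕ} (i : Fin n) (A : Matrix (Fin 2) (Fin 2) ℂ) :
    Matrix (Fin n → Fin 2) (Fin n → Fin 2) ℂ :=
  tensorOp2 fun j => if j = i then A else 1

/-- The inner product ⟨f, g⟩ = Σ conj(f v) g v (antilinear in the first argument). -/
noncomputable def dotc {ι : Type*} [Fintype ι] (f g : ι → ℂ) : ℂ :=
  ∑ v, (starRingEnd ℂ) (f v) * g v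

/-- The unitaries U_g of G_tetra^{(n)}, g = (z₁,…,z_{n−1},x) ∈ {0,1}ⁿ:
U_g = (Z^{(1)}Z^{(2)})^{z₁}···(Z^{(n−1)}Z^{(n)})^{z_{n−1}}·(X⊗⋯⊗X)^x. -/
noncomputable def Ug2 (n : ℕ) [NeZero n] (g : Fin n → Fin 2) :
    Matrix (Fin n → Fin 2) (Fin n → Fin 2) ℂ :=
  (((List.finRange (n - 1)).map fun i =>
      (single2 (⟨i.val, by have := i.isLt; omega⟩ : Fin n) Z2 *
          single2 (⟨i.val + 1, by have := i.isLt; omega⟩ : Fin n) Z2)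
        ^ (g ⟨i.val, by have := i.isLt; omega⟩).val).prod) *
    (tensorOp2 fun _ : Fin n => X2)
      ^ (g ⟨n - 1, by have := Nat.pos_of_ne_zero (NeZero.ne n); omega⟩).val
/-- The three-qubit fiducial state
ψ = (1/2)[1,(9+3i)/10,(9+3i)/10,(−1+3i)/10,(9+3i)/10,(−1+3i)/10,(−1+3i)/10,0]
in the basis |000⟩,…,|111⟩. -/
noncomputable def psi17 : (Fin 3 → Fin 2) → ℂ := fun w =>
  (1 / 2 : ℂ) *
    (![1, (9 + 3 * Complex.I) / 10, (9 + 3 * Complex.I) / 10, (-1 + 3 * Complex.I) / 10,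
        (9 + 3 * Complex.I) / 10, (-1 + 3 * Complex.I) / 10, (-1 + 3 * Complex.I) / 10, 0] :
      Fin 8 → ℂ)
    ⟨4 * (w 0).val + 2 * (w 1).val + (w 2).val,
      by have := (w 0).isLt; have := (w 1).isLt; have := (w 2).isLt; omega⟩

/- ### Auxiliary machinery -/

private def e3aux : (Fin 2 × Fin 2 × Fin 2) ≃ (Fin 3 → Fin 2) where
  toFun p := ![p.1, p.2.1, p.2.2]
  invFun v := (v 0, v 1, v 2)
  left_inv p := by rfl
  right_inv v := by funext i; fin_cases i <;> rfl

private lemma eta3aux (v : Fin 3 → Fin 2) : ![v 0, v 1, v 2] = v := by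
  funext i; fin_cases i <;> rfl

private lemma sum_fin32 (F : (Fin 3 → Fin 2) → ℂ) :
    ∑ v, F v = ∑ a : Fin 2, ∑ b : Fin 2, ∑ c : Fin 2, F ![a, b, c] := by
  rw [← e3aux.sum_comp F, Fintype.sum_prod_type]
  simp [e3aux, Fintype.sum_prod_type]
  rfl

private lemma sZaux (i : Fin 3) (f : (Fin 3 → Fin 2) → ℂ) (v : Fin 3 → Fin 2) :
    (single2 i Z2 *ᵥ f) v = (if v i = 0 then 1 else -1) * f v := by
  obtain ⟨a, b, c, rfl⟩ : ∃ a b c, v = ![a, b, c] := ⟨v 0, v 1, v 2, (eta3aux v).symm⟩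
  rw [Matrix.mulVec, dotProduct, sum_fin32]
  fin_cases i <;> fin_cases a <;> fin_cases b <;> fin_cases c <;>
    simp [single2, tensorOp2, Fin.prod_univ_three, Z2, Matrix.one_apply, Fin.sum_univ_two]

private lemma sXaux (f : (Fin 3 → Fin 2) → ℂ) (v : Fin 3 → Fin 2) :
    ((tensorOp2 fun _ : Fin 3 => X2) *ᵥ f) v = f ![v 0 + 1, v 1 + 1, v 2 + 1] := by
  obtain ⟨a, b, c, rfl⟩ : ∃ a b c, v = ![a, b, c] := ⟨v 0, v 1, v 2, (eta3aux v).symm⟩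
  rw [Matrix.mulVec, dotProduct, sum_fin32]
  fin_cases a <;> fin_cases b <;> fin_cases c <;>
    simp [tensorOp2, Fin.prod_univ_three, X2, Fin.sum_univ_two]

private lemma Ug2_eq_aux (g : Fin 3 → Fin 2) : Ug2 3 g =
    (single2 0 Z2 * single2 1 Z2) ^ (g 0).val *
    ((single2 1 Z2 * single2 2 Z2) ^ (g 1).val *
    (tensorOp2 fun _ : Fin 3 => X2) ^ (g 2).val) := by
  simp [Ug2, List.finRange, List.range, List.range.loop, mul_assoc]

private noncomputable def zfaux (x : Fin 2) : ℂ := if x = 0 then 1 else -1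

private lemma keyaux (g : Fin 3 → Fin 2) (f : (Fin 3 → Fin 2) → ℂ) (v : Fin 3 → Fin 2) :
    (Ug2 3 g *ᵥ f) v =
      (if g 0 = 0 then 1 else zfaux (v 0) * zfaux (v 1)) *
      ((if g 1 = 0 then 1 else zfaux (v 1) * zfaux (v 2)) *
      (if g 2 = 0 then f v else f ![v 0 + 1, v 1 + 1, v 2 + 1])) := by
  have h2 : ∀ x : Fin 2, x = 0 ∨ x = 1 := by decide
  rw [Ug2_eq_aux]
  rcases h2 (g 0) with h0 | h0 <;> rcases h2 (g 1) with h1 | h1 <;>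
      rcases h2 (g 2) with hx | hx <;>
    simp only [h0, h1, hx, Fin.val_zero, Fin.val_one, pow_zero, pow_one, Matrix.one_mul,
      Matrix.mul_one, Matrix.one_mulVec, ← Matrix.mulVec_mulVec, sZaux, sXaux, zfaux,
      if_pos rfl, one_mul, Fin.one_eq_zero_iff, Nat.reduceEqDiff, if_false, if_true] <;>
    ring

set_option maxHeartbeats 4000000 in
private lemma orthaux (g h : Fin 3 → Fin 2) :
    dotc (Ug2 3 g *ᵥ psi17) (Ug2 3 h *ᵥ psi17) = if g = h then 1 else 0 := by
  obtain ⟨g0, g1, g2, rfl⟩ : ∃ a b c, g = ![a, b, c] := ⟨g 0, g 1, g 2, (eta3aux g).symm⟩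
  obtain ⟨h0, h1, h2, rfl⟩ : ∃ a b c, h = ![a, b, c] := ⟨h 0, h 1, h 2, (eta3aux h).symm⟩
  fin_cases g0 <;> fin_cases g1 <;> fin_cases g2 <;>
    fin_cases h0 <;> fin_cases h1 <;> fin_cases h2 <;>
    (first | rw [if_pos rfl] | rw [if_neg (by decide)]) <;>
    rw [dotc, sum_fin32] <;>
    simp only [Fin.sum_univ_two, keyaux, Matrix.cons_val_zero, Matrix.cons_val_one,
      Matrix.head_cons, Matrix.cons_val_two, Matrix.tail_cons, Fin.reduceAdd] <;>
    norm_num [psi17, zfaux, Matrix.cons_val_two] <;>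
    simp only [_root_.map_mul, map_div₀, _root_.map_add, Complex.conj_ofNat, _root_.map_one,
      map_neg, Complex.conj_I, map_zero, map_inv₀] <;>
    ring_nf <;>
    norm_num [Complex.I_sq]

/-!
STATEMENT 17: ψ is a unit vector, its orbit under G_tetra^{(3)} is an orthonormal
basis of (ℂ²)^{⊗3}, and every single-qubit Bloch component equals 9/20.
-/
set_option maxHeartbeats 4000000 in
theorem stmt17 :
    dotc psi17 psi17 = 1 ∧
    (∀ g h : Fin 3 → Fin 2,
      dotc (Ug2 3 g *ᵥ psi17) (Ug2 3 h *ᵥ psi17) = if g = h then 1 else 0) ∧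
    Submodule.span ℂ (Set.range fun g : Fin 3 → Fin 2 => Ug2 3 g *ᵥ psi17) = ⊤ ∧
    (∀ i : Fin 3, ∀ P ∈ ({X2, Y2, Z2} : Set (Matrix (Fin 2) (Fin 2) ℂ)),
      dotc psi17 (single2 i P *ᵥ psi17) = 9 / 20) := by
  refine ⟨?_, orthaux, ?_, ?_⟩
  · rw [dotc, sum_fin32]
    simp only [Fin.sum_univ_two]
    norm_num [psi17, Matrix.cons_val_two]
    simp only [_root_.map_mul, map_div₀, _root_.map_add, Complex.conj_ofNat, _root_.map_one,
      map_neg, Complex.conj_I, map_zero, map_inv₀]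
    ring_nf
    norm_num [Complex.I_sq]
  · have li : LinearIndependent ℂ (fun g : Fin 3 → Fin 2 => Ug2 3 g *ᵥ psi17) := by
      rw [Fintype.linearIndependent_iff]
      intro c hc g
      have key : dotc (Ug2 3 g *ᵥ psi17)
          (∑ i : Fin 3 → Fin 2, c i • (Ug2 3 i *ᵥ psi17)) = c g := by
        have expand : ∀ v, (∑ i : Fin 3 → Fin 2, c i • (Ug2 3 i *ᵥ psi17)) v
            = ∑ i : Fin 3 → Fin 2, c i * (Ug2 3 i *ᵥ psi17) v := by
          intro v; simp [Finset.sum_apply]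
        rw [dotc]
        simp only [expand, Finset.mul_sum]
        rw [Finset.sum_comm]
        calc ∑ i : Fin 3 → Fin 2, ∑ v, (starRingEnd ℂ) ((Ug2 3 g *ᵥ psi17) v)
              * (c i * (Ug2 3 i *ᵥ psi17) v)
              = ∑ i : Fin 3 → Fin 2, c i *
                  dotc (Ug2 3 g *ᵥ psi17) (Ug2 3 i *ᵥ psi17) := by
                refine Finset.sum_congr rfl fun i _ => ?_
                rw [dotc, Finset.mul_sum]
                exact Finset.sum_congr rfl fun v _ => by ring
          _ = ∑ i : Fin 3 → Fin 2, c i * (if g = i then 1 else 0) := by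
                simp only [orthaux]
          _ = c g := by simp [Finset.sum_ite_eq]
      rw [hc] at key
      simpa [dotc] using key.symm
    refine li.span_eq_top_of_card_eq_finrank ?_
    simp [Module.finrank_fintype_fun_eq_card]
  · intro i P hP
    have h3 : ∀ x : Fin 3, x = 0 ∨ x = 1 ∨ x = 2 := by decide
    rcases hP with rfl | rfl | rfl <;> rcases h3 i with rfl | rfl | rfl <;>
      rw [dotc, sum_fin32] <;>
      simp only [Matrix.mulVec, dotProduct, sum_fin32, Fin.sum_univ_two] <;>
      simp only [single2, tensorOp2, X2, Y2, Z2, Fin.prod_univ_three, Matrix.one_apply,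
        Matrix.of_apply, Fin.reduceEq, reduceIte] <;>
      norm_num [psi17, Matrix.cons_val_two] <;>
      simp only [_root_.map_mul, map_div₀, _root_.map_add, Complex.conj_ofNat, _root_.map_one,
        map_neg, Complex.conj_I, map_zero, map_inv₀] <;>
      ring_nf <;>
      norm_num [Complex.I_sq]
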